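/- Let c ≥ 5 be a real constant and let n_1 = n, n_{l+1} = (log2 n_l)^{c-1}, and suppose m satisfies n_l ≥ (c²+c)^{c-1} for all l ≤ m-1. Then for every i with 1 ≤ i ≤ m-1, the sum from l = i+1 to m of log2 n_l is strictly less than (3c² + 2c) · log2 log2 n_i. -/

import Mathlib

open Real


lemma aux_t49 (c : ℝ) (hc : 5 ≤ c) : (4.9:ℝ) ≤ Real.logb 2 (c^2+c) := by
  have hl2 := Real.log_two_gt_d9
  have h30 : (30:ℝ) ≤ c^2 + c := by nlinarith
  have hpow : ((2:ℝ)^(49:ℕ)) ≤ 30^(10:ℕ) := by norm_num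
  have h1 := Real.log_le_log (by positivity) hpow
  rw [Real.log_pow, Real.log_pow] at h1
  push_cast at h1
  have h2 : Real.log 30 ≤ Real.log (c^2+c) := Real.log_le_log (by norm_num) h30
  rw [Real.logb, le_div_iff₀ (by linarith)]
  linarith

lemma aux_ratio (c : ℝ) (hc : 5 ≤ c) :
    Real.logb 2 (c-1) + Real.logb 2 (Real.logb 2 (c^2+c)) ≤ 0.95 * Real.logb 2 (c^2+c) := by
  have hs1 := Real.log_two_gt_d9
  have hs2 := Real.log_two_lt_d9
  have ht49 : (4.9:ℝ) ≤ Real.logb 2 (c^2+c) := aux_t49 c hc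
  rw [Real.logb, Real.logb, Real.logb] at *
  set s := Real.log 2 with hsdef
  have hs : 0 < s := by linarith
  set t := Real.log (c^2+c) / s with htdef
  have htpos : (0:ℝ) < t := by linarith
  have hT : t * s = Real.log (c^2+c) := by rw [htdef]; field_simp
  clear_value s t
  have hA : Real.log (c-1) ≤ 0.5 * (t*s) := by
    have h1 : ((c-1)^(2:ℕ)) ≤ c^2+c := by nlinarith
    have h2 := Real.log_le_log (by nlinarith) h1
    rw [Real.log_pow] at h2; push_cast at h2; rw [hT]; linarith
  have h56 : Real.log 5.6 ≤ 2.5 * s := by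
    have hpow : ((5.6:ℝ)^(2:ℕ)) ≤ 2^(5:ℕ) := by norm_num
    have h3 := Real.log_le_log (by norm_num) hpow
    rw [Real.log_pow, Real.log_pow] at h3; push_cast at h3; rw [hsdef]; linarith
  rw [← add_div, div_le_iff₀ hs]
  rcases le_or_gt 5.6 t with hcase | hcase
  · have hlt : Real.log t ≤ Real.log 5.6 + (t/5.6 - 1) := by
      have h4 := Real.log_le_sub_one_of_pos (x := t/5.6) (by positivity)
      rw [Real.log_div (by positivity) (by norm_num)] at h4
      linarith
    have hprod : (0:ℝ) ≤ (t - 5.6) * (0.45*s - 1/5.6) :=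
      mul_nonneg (by linarith) (by linarith)
    ring_nf at hprod hA hlt h56 ⊢
    linarith [hprod, hA, hlt, h56, hs]
  · have hcc : c^2 + c ≤ 48.6 := by
      by_contra hco
      push_neg at hco
      have h5 : 5.6*s ≤ Real.log 48.6 := by
        have hpow : ((2:ℝ)^(28:ℕ)) ≤ 48.6^(5:ℕ) := by norm_num
        have h6 := Real.log_le_log (by positivity) hpow
        rw [Real.log_pow, Real.log_pow] at h6; push_cast at h6; rw [hsdef]; linarith
      have h7 : Real.log 48.6 < Real.log (c^2+c) := Real.log_lt_log (by norm_num) hco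
      rw [← hT] at h7
      nlinarith
    have hc65 : c ≤ 6.5 := by nlinarith
    have hB : Real.log (c-1) ≤ 0.5*(t*s) - (1/3)*s := by
      have h8 : 1.6*(c-1)^2 ≤ c^2+c := by
        nlinarith [mul_nonneg (by linarith : (0:ℝ) ≤ c - 5) (by linarith : (0:ℝ) ≤ 6.5 - c)]
      have h9 := Real.log_le_log (by nlinarith) h8
      rw [Real.log_mul (by norm_num) (by nlinarith), Real.log_pow] at h9
      push_cast at h9
      have h16 : (2/3) * s ≤ Real.log 1.6 := by
        have hpow : ((2:ℝ)^(2:ℕ)) ≤ 1.6^(3:ℕ) := by norm_num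
        have h10 := Real.log_le_log (by positivity) hpow
        rw [Real.log_pow, Real.log_pow] at h10; push_cast at h10; rw [hsdef]; linarith
      rw [← hT] at h9
      linarith
    have hC : Real.log t ≤ 2.5 * s := by
      have h11 := Real.log_le_log htpos hcase.le
      linarith
    have h49s : 4.9 * s ≤ t * s := mul_le_mul_of_nonneg_right ht49 hs.le
    linarith

lemma aux_key (c x : ℝ) (hc : 5 ≤ c) (hx : (c-1) * Real.logb 2 (c^2+c) ≤ x) :
    (c-1) * Real.logb 2 x ≤ 0.95 * x := by
  have hs1 := Real.log_two_gt_d9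
  have hs2 := Real.log_two_lt_d9
  have ht49 := aux_t49 c hc
  have hrt := aux_ratio c hc
  rw [Real.logb, Real.logb, Real.logb] at *
  set s := Real.log 2 with hsdef
  have hs : (0:ℝ) < s := by linarith
  set t := Real.log (c^2+c) / s with htdef
  have htpos : (0:ℝ) < t := by linarith
  have hc4 : (4:ℝ) ≤ c - 1 := by linarith
  have hxpos : (0:ℝ) < x := by nlinarith
  have hL0pos : (0:ℝ) < (c-1)*t := by nlinarith
  clear_value s t
  -- hrt in product form
  have hrt' : Real.log (c-1) + Real.log t ≤ 0.95 * (t*s) := by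
    rw [← add_div, div_le_iff₀ hs] at hrt
    linarith [hrt]
  -- log x ≤ log ((c-1)*t) + (x/((c-1)*t) - 1)
  have hlog : Real.log x ≤ Real.log (c-1) + Real.log t + (x/((c-1)*t) - 1) := by
    have h4 := Real.log_le_sub_one_of_pos (x := x/((c-1)*t)) (by positivity)
    rw [Real.log_div (by positivity) (by positivity),
      Real.log_mul (by linarith) (by linarith)] at h4
    linarith
  have hd : (c-1)*(x/((c-1)*t)) = x/t := by field_simp
  have h1 : (c-1) * Real.log x ≤ (c-1)*(Real.log (c-1) + Real.log t) + x/t - (c-1) := by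
    have := mul_le_mul_of_nonneg_left hlog (by linarith : (0:ℝ) ≤ c-1)
    rw [mul_add, mul_sub, hd] at this
    linarith
  have hst : (3.3:ℝ) ≤ s * t := by nlinarith
  have h2 : x/t - (c-1) ≤ 0.95*s*(x - (c-1)*t) := by
    rw [sub_le_iff_le_add, div_le_iff₀ htpos]
    nlinarith [mul_le_mul_of_nonneg_right (by nlinarith : (1:ℝ) ≤ 0.95*(s*t))
      (by linarith : (0:ℝ) ≤ x - (c-1)*t)]
  have h3 : (c-1)*(Real.log (c-1) + Real.log t) ≤ (c-1)*(0.95*(t*s)) :=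
    mul_le_mul_of_nonneg_left hrt' (by linarith)
  rw [mul_div_assoc', div_le_iff₀ hs]
  nlinarith [h1, h2, h3]

/-- Let `c ≥ 5`, `n_1 = n`, `n_{l+1} = (log2 n_l)^(c-1)`, and suppose `n_l ≥ (c²+c)^(c-1)`
for all `l ≤ m-1`.  Then for every `1 ≤ i ≤ m-1`,
`∑_{l=i+1}^{m} log2 n_l < (3c² + 2c) · log2 log2 n_i`. -/
theorem stmt5 (c : ℝ) (hc : 5 ≤ c) (n : ℝ) (nseq : ℕ → ℝ) (h1 : nseq 1 = n)
    (hrec : ∀ l, 1 ≤ l → nseq (l + 1) = Real.logb 2 (nseq l) ^ (c - 1))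
    (m : ℕ) (hm : ∀ l, 1 ≤ l → l ≤ m - 1 → (c ^ 2 + c) ^ (c - 1) ≤ nseq l)
    (i : ℕ) (hi : 1 ≤ i) (him : i ≤ m - 1) :
    ∑ l ∈ Finset.Icc (i + 1) m, Real.logb 2 (nseq l)
      < (3 * c ^ 2 + 2 * c) * Real.logb 2 (Real.logb 2 (nseq i)) := by
  have hs1 := Real.log_two_gt_d9
  have hm2 : 2 ≤ m := by omega
  have ht49 := aux_t49 c hc
  have hc4 : (4:ℝ) ≤ c - 1 := by linarith
  set t := Real.logb 2 (c^2+c) with htdef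
  have hccpos : (0:ℝ) < c^2+c := by nlinarith
  have hL : ∀ l, 1 ≤ l → l ≤ m - 1 → (c-1)*t ≤ Real.logb 2 (nseq l) := by
    intro l h1l hlm
    have h := hm l h1l hlm
    have hrp : (0:ℝ) < (c^2+c)^(c-1) := Real.rpow_pos_of_pos hccpos _
    have h2 := Real.logb_le_logb_of_le (b := 2) (by norm_num) hrp h
    have h3 : Real.logb 2 ((c^2+c)^(c-1)) = (c-1)*t := by
      rw [Real.logb_rpow_eq_mul_logb_of_pos hccpos]
    linarith
  have hstep : ∀ j, 1 ≤ j → j ≤ m - 1 →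
      Real.logb 2 (nseq (j+1)) ≤ 0.95 * Real.logb 2 (nseq j) := by
    intro j h1j h2j
    have hLj := hL j h1j h2j
    have hLjpos : (0:ℝ) < Real.logb 2 (nseq j) := by nlinarith
    have hEq : Real.logb 2 (nseq (j+1)) = (c-1) * Real.logb 2 (Real.logb 2 (nseq j)) := by
      rw [hrec j h1j, Real.logb_rpow_eq_mul_logb_of_pos hLjpos]
    rw [hEq]
    exact aux_key c _ hc hLj
  have hLm : 0 ≤ Real.logb 2 (nseq m) := by
    have hm1 : nseq m = Real.logb 2 (nseq (m-1)) ^ (c - 1) := by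
      have h4 := hrec (m-1) (by omega)
      rwa [show m - 1 + 1 = m from by omega] at h4
    have hLm1 := hL (m-1) (by omega) (le_refl _)
    have hLm1pos : (0:ℝ) < Real.logb 2 (nseq (m-1)) := by nlinarith
    rw [hm1, Real.logb_rpow_eq_mul_logb_of_pos hLm1pos]
    have h5 : (0:ℝ) ≤ Real.logb 2 (Real.logb 2 (nseq (m-1))) :=
      Real.logb_nonneg (by norm_num) (by nlinarith)
    nlinarith
  have hsum : ∀ d j, 1 ≤ j → j + d = m →
      (∑ l ∈ Finset.Icc j m, Real.logb 2 (nseq l)) ≤ 20 * Real.logb 2 (nseq j) := by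
    intro d
    induction d with
    | zero =>
      intro j h1j h2j
      obtain rfl : j = m := by omega
      rw [Finset.Icc_self, Finset.sum_singleton]
      linarith
    | succ d ih =>
      intro j h1j h2j
      have hjm : j < m := by omega
      rw [← Finset.Ico_add_one_right_eq_Icc, Finset.sum_eq_sum_Ico_succ_bot (by omega), Finset.Ico_add_one_right_eq_Icc]
      have ihj := ih (j+1) (by omega) (by omega)
      have hstepj := hstep j h1j (by omega)
      linarith
  have hMain := hsum (m - (i+1)) (i+1) (by omega) (by omega)
  have hLi := hL i hi him
  have hLipos : (0:ℝ) < Real.logb 2 (Real.logb 2 (nseq i)) :=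
    Real.logb_pos (by norm_num) (by nlinarith)
  have hEqi : Real.logb 2 (nseq (i+1)) = (c-1) * Real.logb 2 (Real.logb 2 (nseq i)) := by
    rw [hrec i hi, Real.logb_rpow_eq_mul_logb_of_pos (by nlinarith)]
  have hcoef : 20*(c-1) < 3*c^2+2*c := by nlinarith
  have := mul_lt_mul_of_pos_right hcoef hLipos
  rw [hEqi] at hMain
  linarith
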